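/- Define ρ : (0,π) → ℝ by ρ(v) = (sin v / v)·exp(v·cot v). Then ρ is strictly decreasing on (0,π), ρ(v) → e as v → 0⁺, ρ(v) → 0 as v → π⁻, and ρ is a bijection from (0,π) onto (0,e). -/

import Mathlib

open Real Filter Set Topology

noncomputable def rhoFun (v : ℝ) : ℝ :=
  (Real.sin v / v) * Real.exp (v * (Real.cos v / Real.sin v))

lemma rho_hasDeriv {v : ℝ} (hv : 0 < v) (hs : 0 < Real.sin v) :
    HasDerivAt rhoFun (Real.exp (v * (Real.cos v / Real.sin v)) *
      ((2 * Real.cos v * Real.sin v * v - Real.sin v ^ 2 - v ^ 2) / (v ^ 2 * Real.sin v))) v := by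
  have h1 : HasDerivAt (fun x : ℝ => Real.sin x / x)
      ((Real.cos v * v - Real.sin v * 1) / v ^ 2) v :=
    (Real.hasDerivAt_sin v).div (hasDerivAt_id v) hv.ne'
  have h2 : HasDerivAt (fun x : ℝ => Real.cos x / Real.sin x)
      ((-Real.sin v * Real.sin v - Real.cos v * Real.cos v) / Real.sin v ^ 2) v :=
    (Real.hasDerivAt_cos v).div (Real.hasDerivAt_sin v) hs.ne'
  have h2' := (hasDerivAt_id v).mul h2
  have h3 := h2'.exp
  have h := h1.mul h3
  refine h.congr_deriv ?_
  have hpy := Real.sin_sq_add_cos_sq v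
  field_simp
  rw [show ((id : ℝ → ℝ) * fun x : ℝ => Real.cos x / Real.sin x) v = Real.cos v * v / Real.sin v by simp; ring, id_eq]
  linear_combination (-v^2 * Real.exp (Real.cos v * v / Real.sin v)) * hpy

lemma rho_deriv_neg {v : ℝ} (hv : v ∈ Set.Ioo 0 π) : deriv rhoFun v < 0 := by
  have hs : 0 < Real.sin v := Real.sin_pos_of_pos_of_lt_pi hv.1 hv.2
  rw [(rho_hasDeriv hv.1 hs).deriv]
  have hpy := Real.sin_sq_add_cos_sq v
  have hnum : 2 * Real.cos v * Real.sin v * v - Real.sin v ^ 2 - v ^ 2 < 0 := by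
    nlinarith [sq_nonneg (v - Real.sin v * Real.cos v), mul_pos (mul_pos hs hs) (mul_pos hs hs)]
  have hden : 0 < v ^ 2 * Real.sin v := mul_pos (pow_pos hv.1 2) hs
  exact mul_neg_of_pos_of_neg (Real.exp_pos _) (div_neg_of_neg_of_pos hnum hden)

lemma rho_cont : ContinuousOn rhoFun (Set.Ioo 0 π) := fun v hv =>
  ((rho_hasDeriv hv.1 (Real.sin_pos_of_pos_of_lt_pi hv.1 hv.2)).continuousAt).continuousWithinAt

lemma rho_anti : StrictAntiOn rhoFun (Set.Ioo 0 π) := by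
  apply strictAntiOn_of_deriv_neg (convex_Ioo 0 π) rho_cont
  intro x hx
  rw [interior_Ioo] at hx
  exact rho_deriv_neg hx

lemma sin_div_self_tendsto : Tendsto (fun x : ℝ => Real.sin x / x) (𝓝[≠] 0) (𝓝 1) := by
  have h := Real.hasDerivAt_sin 0
  rw [hasDerivAt_iff_tendsto_slope] at h
  simp only [slope_fun_def, Real.sin_zero, sub_zero, Real.cos_zero] at h
  exact h.congr (fun x => by simp [div_eq_inv_mul])

lemma rho_tendsto_e : Tendsto rhoFun (𝓝[>] (0:ℝ)) (𝓝 (Real.exp 1)) := by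
  have hmono : 𝓝[>] (0:ℝ) ≤ 𝓝[≠] (0:ℝ) :=
    nhdsWithin_mono _ (fun x hx => ne_of_gt hx)
  have h1 : Tendsto (fun x : ℝ => Real.sin x / x) (𝓝[>] (0:ℝ)) (𝓝 1) :=
    sin_div_self_tendsto.mono_left hmono
  have h2 : Tendsto (fun x : ℝ => x / Real.sin x) (𝓝[>] (0:ℝ)) (𝓝 1) := by
    have := h1.inv₀ one_ne_zero
    simpa using this
  have hcos : Tendsto (fun x : ℝ => Real.cos x) (𝓝[>] (0:ℝ)) (𝓝 1) := by
    have h := (Real.continuous_cos.tendsto 0).mono_left (nhdsWithin_le_nhds (s := Set.Ioi (0:ℝ)))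
    simpa using h
  have h3 : Tendsto (fun x : ℝ => x * (Real.cos x / Real.sin x)) (𝓝[>] (0:ℝ)) (𝓝 1) := by
    have := h2.mul hcos
    simp only [one_mul] at this
    refine this.congr (fun x => by ring)
  have h4 := (Real.continuous_exp.tendsto 1).comp h3
  have := h1.mul h4
  rw [one_mul] at this
  exact this

lemma rho_tendsto_zero : Tendsto rhoFun (𝓝[<] π) (𝓝 0) := by
  have hev : ∀ᶠ v in 𝓝[<] π, v ∈ Set.Ioo (π/2) π := by
    apply Ioo_mem_nhdsLT_of_mem
    constructor
    · linarith [Real.pi_pos]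
    · exact le_refl π
  have hge : ∀ᶠ v in 𝓝[<] π, 0 ≤ rhoFun v := by
    filter_upwards [hev] with v hv
    have hs : 0 < Real.sin v := Real.sin_pos_of_pos_of_lt_pi (by linarith [Real.pi_pos, hv.1]) hv.2
    have hv0 : 0 < v := by linarith [Real.pi_pos, hv.1]
    unfold rhoFun
    positivity
  have hle : ∀ᶠ v in 𝓝[<] π, rhoFun v ≤ Real.sin v / v := by
    filter_upwards [hev] with v hv
    have hs : 0 < Real.sin v := Real.sin_pos_of_pos_of_lt_pi (by linarith [Real.pi_pos, hv.1]) hv.2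
    have hv0 : 0 < v := by linarith [Real.pi_pos, hv.1]
    have hc : Real.cos v ≤ 0 := Real.cos_nonpos_of_pi_div_two_le_of_le hv.1.le (by linarith [Real.pi_pos, hv.2])
    have hexp : Real.exp (v * (Real.cos v / Real.sin v)) ≤ 1 := by
      rw [Real.exp_le_one_iff]
      have : Real.cos v / Real.sin v ≤ 0 := div_nonpos_of_nonpos_of_nonneg hc hs.le
      nlinarith
    have hsv : 0 ≤ Real.sin v / v := by positivity
    calc rhoFun v ≤ (Real.sin v / v) * 1 := mul_le_mul_of_nonneg_left hexp hsv
    _ = Real.sin v / v := mul_one _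
  have hg : Tendsto (fun v : ℝ => Real.sin v / v) (𝓝[<] π) (𝓝 0) := by
    have : Tendsto (fun v : ℝ => Real.sin v / v) (𝓝 π) (𝓝 (Real.sin π / π)) :=
      (Real.continuous_sin.tendsto π).div tendsto_id Real.pi_ne_zero
    rw [Real.sin_pi, zero_div] at this
    exact this.mono_left nhdsWithin_le_nhds
  exact squeeze_zero' hge hle hg

lemma rho_lt_e {v : ℝ} (hv : v ∈ Set.Ioo 0 π) : rhoFun v < Real.exp 1 := by
  have hhalf : v / 2 ∈ Set.Ioo 0 π := ⟨by linarith [hv.1], by linarith [hv.2, hv.1]⟩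
  have h1 : rhoFun v < rhoFun (v / 2) := rho_anti hhalf hv (by linarith [hv.1])
  have h2 : rhoFun (v / 2) ≤ Real.exp 1 := by
    refine ge_of_tendsto rho_tendsto_e ?_
    filter_upwards [Ioo_mem_nhdsGT_of_mem (Set.left_mem_Ico.mpr (by linarith [hv.1]) :
      (0:ℝ) ∈ Set.Ico 0 (v/2))] with t ht
    exact (rho_anti ⟨ht.1, by linarith [hv.2, ht.2, Real.pi_pos]⟩ hhalf ht.2).le
  linarith

theorem stmt12 :
    StrictAntiOn rhoFun (Set.Ioo 0 π) ∧
    Filter.Tendsto rhoFun (nhdsWithin 0 (Set.Ioi 0)) (nhds (Real.exp 1)) ∧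
    Filter.Tendsto rhoFun (nhdsWithin π (Set.Iio π)) (nhds 0) ∧
    Set.BijOn rhoFun (Set.Ioo 0 π) (Set.Ioo 0 (Real.exp 1)) := by
  refine ⟨rho_anti, rho_tendsto_e, rho_tendsto_zero, ?_, rho_anti.injOn, ?_⟩
  · -- MapsTo
    intro v hv
    have hs : 0 < Real.sin v := Real.sin_pos_of_pos_of_lt_pi hv.1 hv.2
    have : 0 < rhoFun v := by
      have hv0 := hv.1
      unfold rhoFun; positivity
    exact ⟨this, rho_lt_e hv⟩
  · -- SurjOn
    intro y hy
    obtain ⟨hy0, hye⟩ := hy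
    have hIoo : Set.Ioo (0:ℝ) π ∈ 𝓝[>] (0:ℝ) :=
      Ioo_mem_nhdsGT_of_mem (Set.left_mem_Ico.mpr Real.pi_pos)
    have ha : ∃ a, a ∈ Set.Ioo (0:ℝ) π ∧ y < rhoFun a := by
      have := (rho_tendsto_e.eventually_const_lt hye).and (eventually_of_mem hIoo fun x hx => hx)
      obtain ⟨a, h1, h2⟩ := this.exists
      exact ⟨a, h2, h1⟩
    have hb : ∃ b, b ∈ Set.Ioo (0:ℝ) π ∧ rhoFun b < y := by
      have hIoo' : Set.Ioo (0:ℝ) π ∈ 𝓝[<] π :=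
        Ioo_mem_nhdsLT_of_mem (Set.right_mem_Ioc.mpr Real.pi_pos)
      have := (rho_tendsto_zero.eventually_lt_const hy0).and (eventually_of_mem hIoo' fun x hx => hx)
      obtain ⟨b, h1, h2⟩ := this.exists
      exact ⟨b, h2, h1⟩
    obtain ⟨a, haI, hay⟩ := ha
    obtain ⟨b, hbI, hby⟩ := hb
    have hab : a < b := by
      rcases lt_trichotomy a b with h | h | h
      · exact h
      · exfalso; rw [h] at hay; linarith
      · exfalso; have := rho_anti hbI haI h; linarith
    have hsub : Set.Icc a b ⊆ Set.Ioo 0 π := fun x hx => ⟨lt_of_lt_of_le haI.1 hx.1, lt_of_le_of_lt hx.2 hbI.2⟩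
    have hcont : ContinuousOn rhoFun (Set.Icc a b) := rho_cont.mono hsub
    have := intermediate_value_Icc' hab.le hcont
    have hy' : y ∈ Set.Icc (rhoFun b) (rhoFun a) := ⟨hby.le, hay.le⟩
    obtain ⟨x, hx, hxy⟩ := this hy'
    exact ⟨x, hsub hx, hxy⟩
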